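/- arXiv:1306.0765 — 5 statements merged into one kernel-verified Lean document; each statement's English description precedes it below -/
import Mathlib

section
/- For integers m > 3, g(2^m) < 2^m, where g(n) is the largest k such that there exist distinct primes P_1, ..., P_k with P_i dividing n+i for each 1 ≤ i ≤ k. -/
/-- `(n, k)` has a prime representation: there are distinct primes `P₁, …, P_k`
with `Pᵢ ∣ n + i` for `1 ≤ i ≤ k`. -/
def primeRep (n k : ℕ) : Prop :=
  ∃ P : Fin k → ℕ, Function.Injective P ∧ ∀ i : Fin k, (P i).Prime ∧ P i ∣ n + (i : ℕ) + 1

lemma prime_dvd_two_three {p a b : ℕ} (hp : p.Prime) (h : p ∣ 2 ^ a * 3 ^ b) :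
    p = 2 ∨ p = 3 := by
  rcases (Nat.Prime.dvd_mul hp).mp h with h' | h'
  · left
    exact (Nat.prime_dvd_prime_iff_eq hp Nat.prime_two).mp (hp.dvd_of_dvd_pow h')
  · right
    exact (Nat.prime_dvd_prime_iff_eq hp Nat.prime_three).mp (hp.dvd_of_dvd_pow h')

/-- For integers `m > 3`, `g(2^m) < 2^m`: every `k` admitting a prime
representation for `n = 2^m` satisfies `k < 2^m`. -/
theorem g_two_pow_lt (m : ℕ) (hm : m > 3) (k : ℕ) (h : primeRep (2 ^ m) k) :
    k < 2 ^ m := by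
  by_contra hk
  push_neg at hk
  obtain ⟨P, hinj, hP⟩ := h
  obtain ⟨m', rfl⟩ : ∃ m', m = m' + 4 := ⟨m - 4, by omega⟩
  have hB : (1 : ℕ) ≤ 2 ^ (m' + 1) := Nat.one_le_two_pow
  have e3 : 2 ^ (m' + 3) = 2 ^ (m' + 1) * 4 := by ring
  have e4 : 2 ^ (m' + 4) = 2 ^ (m' + 1) * 8 := by ring
  have e5 : 2 ^ (m' + 5) = 2 ^ (m' + 1) * 16 := by ring
  set B := 2 ^ (m' + 1) with hBdef
  have hlt1 : B - 1 < k := by omega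
  have hlt2 : B * 4 - 1 < k := by omega
  have hlt3 : B * 8 - 1 < k := by omega
  set i₁ : Fin k := ⟨B - 1, hlt1⟩
  set i₂ : Fin k := ⟨B * 4 - 1, hlt2⟩
  set i₃ : Fin k := ⟨B * 8 - 1, hlt3⟩
  obtain ⟨hp1, hd1⟩ := hP i₁
  obtain ⟨hp2, hd2⟩ := hP i₂
  obtain ⟨hp3, hd3⟩ := hP i₃
  have v1 : 2 ^ (m' + 4) + (i₁ : ℕ) + 1 = 2 ^ (m' + 1) * 3 ^ 2 := by
    simp only [i₁]; omega
  have v2 : 2 ^ (m' + 4) + (i₂ : ℕ) + 1 = 2 ^ (m' + 3) * 3 ^ 1 := by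
    simp only [i₂]; omega
  have v3 : 2 ^ (m' + 4) + (i₃ : ℕ) + 1 = 2 ^ (m' + 5) * 3 ^ 0 := by
    simp only [i₃]; omega
  rw [v1] at hd1; rw [v2] at hd2; rw [v3] at hd3
  have c1 := prime_dvd_two_three hp1 hd1
  have c2 := prime_dvd_two_three hp2 hd2
  have c3 := prime_dvd_two_three hp3 hd3
  have n12 : P i₁ ≠ P i₂ := fun hq => by
    have := hinj hq
    simp only [i₁, i₂, Fin.mk.injEq] at this
    omega
  have n13 : P i₁ ≠ P i₃ := fun hq => by
    have := hinj hq
    simp only [i₁, i₃, Fin.mk.injEq] at this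
    omega
  have n23 : P i₂ ≠ P i₃ := fun hq => by
    have := hinj hq
    simp only [i₂, i₃, Fin.mk.injEq] at this
    omega
  rcases c1 with h1 | h1 <;> rcases c2 with h2 | h2 <;> rcases c3 with h3 | h3 <;> omega
end

section
/- Let x, y, z be real numbers with y ≥ 2, and suppose Ψ(x+z, y) − Ψ(x, y) > π(y), where Ψ(X, y) counts positive integers ≤ X all of whose prime factors are ≤ y, and π is the prime counting function. Then g(⌊x⌋) < z, where g(n) is the largest k such that there exist distinct primes P_1, ..., P_k with P_i | (n+i). -/
/-- `Ψ(x, y)`: the number of positive integers `≤ x` all of whose prime factors are `≤ y`. -/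
noncomputable def Psi (x y : ℝ) : ℕ :=
  Set.ncard {m : ℕ | 0 < m ∧ (m : ℝ) ≤ x ∧ ∀ p : ℕ, p.Prime → p ∣ m → (p : ℝ) ≤ y}

/-- `π(y)`: the number of primes `≤ y`. -/
noncomputable def piR (y : ℝ) : ℕ :=
  Set.ncard {p : ℕ | p.Prime ∧ (p : ℝ) ≤ y}

/-- Key lemma: if `Ψ(x+z, y) − Ψ(x, y) > π(y)` then `g(⌊x⌋) < z`. -/
theorem g_floor_lt_of_smooth (x y z : ℝ) (hy : y ≥ 2)
    (h : Psi (x + z) y > Psi x y + piR y) (k : ℕ) (hk : primeRep ⌊x⌋₊ k) :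
    (k : ℝ) < z := by
  by_contra hzk
  push_neg at hzk
  obtain ⟨P, hPinj, hP⟩ := hk
  set A := {m : ℕ | 0 < m ∧ (m : ℝ) ≤ x ∧ ∀ p : ℕ, p.Prime → p ∣ m → (p : ℝ) ≤ y} with hA
  set B := {m : ℕ | 0 < m ∧ (m : ℝ) ≤ x + z ∧ ∀ p : ℕ, p.Prime → p ∣ m → (p : ℝ) ≤ y} with hB
  set T := {p : ℕ | p.Prime ∧ (p : ℝ) ≤ y} with hT
  have hAfin : A.Finite :=
    (Set.finite_Iic ⌊x⌋₊).subset (fun m hm => Nat.le_floor hm.2.1)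
  have hBfin : B.Finite :=
    (Set.finite_Iic ⌊x + z⌋₊).subset (fun m hm => Nat.le_floor hm.2.1)
  have hTfin : T.Finite :=
    (Set.finite_Iic ⌊y⌋₊).subset (fun p hp => Nat.le_floor hp.2)
  have hsub : B ⊆ A ∪ (B \ A) := by
    intro m hm
    by_cases hmA : m ∈ A
    · exact Or.inl hmA
    · exact Or.inr ⟨hm, hmA⟩
  have h1 : Psi (x + z) y ≤ Psi x y + (B \ A).ncard := by
    calc Psi (x + z) y = B.ncard := rfl
      _ ≤ (A ∪ (B \ A)).ncard :=
          Set.ncard_le_ncard hsub (hAfin.union hBfin.diff)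
      _ ≤ A.ncard + (B \ A).ncard := Set.ncard_union_le _ _
  have h2 : piR y < (B \ A).ncard := by
    have : Psi x y + piR y < Psi x y + (B \ A).ncard := lt_of_lt_of_le h h1
    omega
  -- key facts about elements of B \ A
  have hfacts : ∀ m ∈ B \ A, ⌊x⌋₊ < m ∧ m - ⌊x⌋₊ - 1 < k := by
    intro m hm
    obtain ⟨⟨hm0, hmle, hsm⟩, hmA⟩ := hm
    have hxm : x < (m : ℝ) := by
      by_contra hle
      push_neg at hle
      exact hmA ⟨hm0, hle, hsm⟩
    have hfl : ⌊x⌋₊ < m := by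
      rcases le_or_gt 0 x with hx0 | hx0
      · exact_mod_cast ((Nat.floor_le hx0).trans_lt hxm)
      · rw [Nat.floor_of_nonpos hx0.le]; exact hm0
    refine ⟨hfl, ?_⟩
    have hmlt : (m : ℝ) < (⌊x⌋₊ : ℝ) + 1 + k := by
      calc (m : ℝ) ≤ x + z := hmle
        _ < (⌊x⌋₊ : ℝ) + 1 + z := by
            have := Nat.lt_floor_add_one x
            linarith
        _ ≤ (⌊x⌋₊ : ℝ) + 1 + k := by linarith
    have hmlt' : m < ⌊x⌋₊ + 1 + k := by exact_mod_cast hmlt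
    omega
  -- the injection into primes ≤ y
  set f : ℕ → ℕ := fun m => if hik : m - ⌊x⌋₊ - 1 < k then P ⟨m - ⌊x⌋₊ - 1, hik⟩ else 0
    with hf
  have hfval : ∀ m ∈ B \ A, ∀ (hik : m - ⌊x⌋₊ - 1 < k),
      f m = P ⟨m - ⌊x⌋₊ - 1, hik⟩ := by
    intro m _ hik
    simp [hf, hik]
  have hmaps : ∀ m ∈ B \ A, f m ∈ T := by
    intro m hm
    obtain ⟨hfl, hik⟩ := hfacts m hm
    rw [hfval m hm hik]
    obtain ⟨hprime, hdvd⟩ := hP ⟨m - ⌊x⌋₊ - 1, hik⟩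
    have heq : ⌊x⌋₊ + (m - ⌊x⌋₊ - 1) + 1 = m := by omega
    rw [heq] at hdvd
    exact ⟨hprime, hm.1.2.2 _ hprime hdvd⟩
  have hinj : Set.InjOn f (B \ A) := by
    intro m1 hm1 m2 hm2 hfe
    obtain ⟨hfl1, hik1⟩ := hfacts m1 hm1
    obtain ⟨hfl2, hik2⟩ := hfacts m2 hm2
    rw [hfval m1 hm1 hik1, hfval m2 hm2 hik2] at hfe
    have := hPinj hfe
    have : m1 - ⌊x⌋₊ - 1 = m2 - ⌊x⌋₊ - 1 := congrArg Fin.val this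
    omega
  have h3 : (B \ A).ncard ≤ T.ncard :=
    Set.ncard_le_ncard_of_injOn f hmaps hinj hTfin
  have : piR y = T.ncard := rfl
  omega
end

section
/- Assume that for every ε > 0 there exists N such that for all n ≥ N, Ψ(n + n^ε, n^ε) − Ψ(n, n^ε) ≥ c(ε)·n^ε for some constant c(ε) > 0 (smooth numbers in short intervals conjecture). Then for every ε > 0, g(n) < n^ε for all sufficiently large n. -/
/-- The product of a finset of naturals, all at least `2`, is at least `(card + 1)!`. -/
lemma factorial_succ_card_le_prod' : ∀ (nn : ℕ) (T : Finset ℕ), T.card = nn →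
    (∀ x ∈ T, 2 ≤ x) → Nat.factorial (T.card + 1) ≤ ∏ x ∈ T, x := by
  intro nn
  induction nn with
  | zero =>
    intro T hn _
    rw [Finset.card_eq_zero] at hn
    subst hn; simp [Nat.factorial]
  | succ n ih =>
    intro T hn hT
    have hne : T.Nonempty := by
      rw [← Finset.card_pos, hn]; omega
    set M := T.max' hne with hM
    have hMmem : M ∈ T := T.max'_mem hne
    -- every element of T lies in Icc 2 M
    have hsub : T ⊆ Finset.Icc 2 M := by
      intro x hx
      exact Finset.mem_Icc.mpr ⟨hT x hx, Finset.le_max' T x hx⟩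
    have hcard : T.card ≤ M - 1 := by
      have := Finset.card_le_card hsub
      simpa [Nat.card_Icc] using this
    have hM2 : 2 ≤ M := hT M hMmem
    have hMn : n + 2 ≤ M := by omega
    have herase : (T.erase M).card = n := by
      rw [Finset.card_erase_of_mem hMmem, hn]
      omega
    have hprod : ∏ x ∈ T, x = M * ∏ x ∈ T.erase M, x :=
      (Finset.mul_prod_erase T _ hMmem).symm
    have ihs : Nat.factorial ((T.erase M).card + 1) ≤ ∏ x ∈ T.erase M, x :=
      ih (T.erase M) herase (fun x hx => hT x (Finset.mem_of_mem_erase hx))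
    rw [herase] at ihs
    calc Nat.factorial (T.card + 1) = (n + 2) * Nat.factorial (n + 1) := by
          rw [hn, Nat.factorial_succ]
      _ ≤ M * ∏ x ∈ T.erase M, x :=
          Nat.mul_le_mul hMn ihs
      _ = ∏ x ∈ T, x := hprod.symm

lemma factorial_succ_card_le_prod (T : Finset ℕ) (hT : ∀ x ∈ T, 2 ≤ x) :
    Nat.factorial (T.card + 1) ≤ ∏ x ∈ T, x :=
  factorial_succ_card_le_prod' T.card T rfl hT

/-- Assuming the smooth-numbers-in-short-intervals conjecture,
`g(n) < n^ε` for every `ε > 0` and all sufficiently large `n`. -/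
theorem g_lt_rpow_of_smooth_conjecture
    (hconj : ∀ ε : ℝ, ε > 0 → ∃ c : ℝ, c > 0 ∧ ∃ N : ℕ, ∀ n : ℕ, n ≥ N →
      (Psi ((n : ℝ) + (n : ℝ) ^ ε) ((n : ℝ) ^ ε) : ℝ) ≥
        (Psi (n : ℝ) ((n : ℝ) ^ ε) : ℝ) + c * (n : ℝ) ^ ε) :
    ∀ ε : ℝ, ε > 0 → ∃ N : ℕ, ∀ n : ℕ, n ≥ N → ∀ k : ℕ, primeRep n k →
      (k : ℝ) < (n : ℝ) ^ ε := by
  intro ε hε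
  obtain ⟨c, hc, N0, hN0⟩ := hconj ε hε
  -- a natural `d` with `1/d ≤ c`
  set d : ℕ := ⌈1 / c⌉₊ + 1 with hd_def
  have hd_pos : 0 < d := by positivity
  have hdc : 1 / (d : ℝ) ≤ c := by
    have h1 : 1 / c ≤ (d : ℝ) := by
      have := Nat.le_ceil (1 / c)
      push_cast [hd_def]
      linarith
    rw [div_le_iff₀ (by exact_mod_cast hd_pos)]
    rw [div_le_iff₀ hc] at h1
    linarith [h1]
  -- factorial eventually beats `(4^d)^m`
  obtain ⟨m0, hm0⟩ := Filter.eventually_atTop.mp (Nat.eventually_pow_lt_factorial_sub (4 ^ d) 0)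
  -- threshold making `(n:ℝ)^ε ≥ m0 / c`
  set A : ℝ := (m0 : ℝ) / c with hA_def
  have hA_nonneg : 0 ≤ A := by positivity
  set N3 : ℕ := ⌈A ^ (1 / ε)⌉₊ + 1 with hN3_def
  refine ⟨max (max N0 1) N3, fun n hn k hk => ?_⟩
  have hnN0 : n ≥ N0 := le_trans (le_trans (le_max_left N0 1) (le_max_left _ N3)) hn
  have hn1 : 1 ≤ n := le_trans (le_trans (le_max_right N0 1) (le_max_left _ N3)) hn
  have hnN3 : n ≥ N3 := le_trans (le_max_right _ N3) hn
  set y : ℝ := (n : ℝ) ^ ε with hy_def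
  have hy1 : (1 : ℝ) ≤ y := Real.one_le_rpow (by exact_mod_cast hn1) hε.le
  have hy_pos : 0 < y := lt_of_lt_of_le one_pos hy1
  -- `y ≥ A`
  have hyA : A ≤ y := by
    have hnB : A ^ (1 / ε) ≤ (n : ℝ) := by
      have : (N3 : ℝ) ≤ n := by exact_mod_cast hnN3
      have h2 : A ^ (1 / ε) ≤ (⌈A ^ (1 / ε)⌉₊ : ℝ) := Nat.le_ceil _
      have h3 : ((⌈A ^ (1 / ε)⌉₊ : ℝ)) ≤ (N3 : ℝ) := by
        rw [hN3_def]; push_cast; linarith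
      linarith
    calc A = (A ^ (1 / ε)) ^ ε := by
            rw [← Real.rpow_mul hA_nonneg, one_div_mul_cancel hε.ne', Real.rpow_one]
      _ ≤ (n : ℝ) ^ ε := Real.rpow_le_rpow (Real.rpow_nonneg hA_nonneg _) hnB hε.le
      _ = y := rfl
  by_contra hcon
  push_neg at hcon
  -- so `y ≤ k`
  have hyk : y ≤ (k : ℝ) := hcon
  have hk1 : 1 ≤ k := by exact_mod_cast le_trans hy1 hyk
  -- the two Psi sets
  set S1 : Set ℕ := {m : ℕ | 0 < m ∧ (m : ℝ) ≤ (n : ℝ) ∧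
      ∀ p : ℕ, p.Prime → p ∣ m → (p : ℝ) ≤ y} with hS1_def
  set S2 : Set ℕ := {m : ℕ | 0 < m ∧ (m : ℝ) ≤ (n : ℝ) + y ∧
      ∀ p : ℕ, p.Prime → p ∣ m → (p : ℝ) ≤ y} with hS2_def
  have hfin2 : S2.Finite := by
    apply Set.Finite.subset (Set.finite_Iic ⌊(n : ℝ) + y⌋₊)
    intro m hm
    exact Nat.le_floor hm.2.1
  have hsub : S1 ⊆ S2 := by
    intro m hm
    exact ⟨hm.1, le_trans hm.2.1 (by linarith), hm.2.2⟩
  set D : Set ℕ := S2 \ S1 with hD_def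
  have hDfin : D.Finite := hfin2.diff
  have hcard_eq : D.ncard + S1.ncard = S2.ncard :=
    Set.ncard_diff_add_ncard_of_subset hsub hfin2
  have hPsi1 : Psi (n : ℝ) y = S1.ncard := rfl
  have hPsi2 : Psi ((n : ℝ) + y) y = S2.ncard := rfl
  have hDcard : c * y ≤ (D.ncard : ℝ) := by
    have h := hN0 n hnN0
    rw [hPsi1, hPsi2] at h
    have : (D.ncard : ℝ) + (S1.ncard : ℝ) = (S2.ncard : ℝ) := by exact_mod_cast hcard_eq
    linarith
  -- properties of elements of D
  have hDmem : ∀ m ∈ D, n + 1 ≤ m ∧ m ≤ n + k := by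
    intro m hm
    obtain ⟨hm2, hm1⟩ := hm
    have hnm : n < m := by
      by_contra hle
      push_neg at hle
      exact hm1 ⟨hm2.1, (by exact_mod_cast hle : (m : ℝ) ≤ (n : ℝ)), hm2.2.2⟩
    have hmk : m ≤ n + k := by
      have : (m : ℝ) ≤ (n : ℝ) + (k : ℝ) := le_trans hm2.2.1 (by linarith)
      exact_mod_cast this
    exact ⟨hnm, hmk⟩
  obtain ⟨P, hPinj, hP⟩ := hk
  classical
  set f : ℕ → ℕ := fun m => if h : m - n - 1 < k then P ⟨m - n - 1, h⟩ else 0 with hf_def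
  have hidx : ∀ m ∈ D, m - n - 1 < k := by
    intro m hm
    obtain ⟨h1, h2⟩ := hDmem m hm
    omega
  have hfm : ∀ m ∈ D, (f m).Prime ∧ f m ∣ m := by
    intro m hm
    have hi := hidx m hm
    have h1 := (hDmem m hm).1
    have := hP ⟨m - n - 1, hi⟩
    simp only [hf_def, dif_pos hi]
    refine ⟨this.1, ?_⟩
    have heq : n + (m - n - 1) + 1 = m := by omega
    simpa [heq] using this.2
  have hfy : ∀ m ∈ D, (f m : ℝ) ≤ y := by
    intro m hm
    obtain ⟨hprime, hdvd⟩ := hfm m hm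
    exact hm.1.2.2 (f m) hprime hdvd
  have hinjOn : Set.InjOn f D := by
    intro m1 hm1 m2 hm2 hfeq
    have hi1 := hidx m1 hm1
    have hi2 := hidx m2 hm2
    simp only [hf_def, dif_pos hi1, dif_pos hi2] at hfeq
    have := hPinj hfeq
    have : m1 - n - 1 = m2 - n - 1 := congrArg Fin.val this
    have h1 := (hDmem m1 hm1).1
    have h2 := (hDmem m2 hm2).1
    omega
  -- the finset of primes
  set T : Finset ℕ := Finset.image f hDfin.toFinset with hT_def
  have hTcard : T.card = D.ncard := by
    rw [hT_def, Finset.card_image_of_injOn (by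
      rw [Set.Finite.coe_toFinset]; exact hinjOn)]
    exact (Set.ncard_eq_toFinset_card D hDfin).symm
  have hTmem : ∀ x ∈ T, x.Prime ∧ (x : ℝ) ≤ y := by
    intro x hx
    rw [hT_def, Finset.mem_image] at hx
    obtain ⟨m, hm, rfl⟩ := hx
    rw [Set.Finite.mem_toFinset] at hm
    exact ⟨(hfm m hm).1, hfy m hm⟩
  set Y : ℕ := ⌊y⌋₊ with hY_def
  have hTsub : T ⊆ Finset.filter Nat.Prime (Finset.range (Y + 1)) := by
    intro x hx
    obtain ⟨hprime, hle⟩ := hTmem x hx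
    rw [Finset.mem_filter, Finset.mem_range]
    exact ⟨Nat.lt_succ_of_le (Nat.le_floor hle), hprime⟩
  -- product chain
  have hprod_le : ∏ x ∈ T, x ≤ primorial Y := by
    apply Finset.prod_le_prod_of_subset_of_one_le' hTsub
    intro i hi _
    rw [Finset.mem_filter] at hi
    exact hi.2.one_lt.le
  have hfact_le : Nat.factorial (T.card + 1) ≤ ∏ x ∈ T, x :=
    factorial_succ_card_le_prod T (fun x hx => (hTmem x hx).1.two_le)
  set m : ℕ := T.card with hm_def
  -- `Y ≤ d * m`
  have hcy : c * y ≤ (m : ℝ) := by rw [hTcard]; exact hDcard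
  have hYdm : Y ≤ d * m := by
    have hYy : (Y : ℝ) ≤ y := Nat.floor_le hy_pos.le
    have hdR : (0 : ℝ) < d := by exact_mod_cast hd_pos
    have h3 : (1 / d) * y ≤ c * y := mul_le_mul_of_nonneg_right hdc hy_pos.le
    have h4 : (1 / d) * y ≤ (m : ℝ) := le_trans h3 hcy
    have h2 : y ≤ (d : ℝ) * m := by
      calc y = (d : ℝ) * ((1 / d) * y) := by field_simp
        _ ≤ (d : ℝ) * m := mul_le_mul_of_nonneg_left h4 hdR.le
    have h5 : (Y : ℝ) ≤ (d : ℝ) * (m : ℝ) := by linarith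
    exact_mod_cast h5
  -- `m ≥ m0`
  have hmm0 : m0 ≤ m := by
    have : (m0 : ℝ) ≤ (m : ℝ) := by
      have hcA : c * A = m0 := by
        rw [hA_def]; field_simp
      have : c * A ≤ c * y := mul_le_mul_of_nonneg_left hyA hc.le
      linarith [hcy, this, hcA.ge]
    exact_mod_cast this
  -- final contradiction
  have hfac : (4 ^ d) ^ m < Nat.factorial (m - 0) := hm0 m hmm0
  rw [Nat.sub_zero] at hfac
  have hchain : Nat.factorial (m + 1) ≤ (4 ^ d) ^ m :=
    calc Nat.factorial (m + 1) ≤ ∏ x ∈ T, x := hfact_le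
      _ ≤ primorial Y := hprod_le
      _ ≤ 4 ^ Y := primorial_le_4_pow Y
      _ ≤ 4 ^ (d * m) := Nat.pow_le_pow_right (by norm_num) hYdm
      _ = (4 ^ d) ^ m := pow_mul 4 d m
  have : Nat.factorial m ≤ Nat.factorial (m + 1) := Nat.factorial_le (Nat.le_succ m)
  omega
end

section
/- Suppose Grimm's conjecture holds: whenever n+1, ..., n+k are all composite, there exist distinct primes P_i with P_i | (n+i) for 1 ≤ i ≤ k. Suppose also that g(n) < n^ε for all sufficiently large n, for a fixed 0 < ε < 1. Then p_{i+1} − p_i < p_i^ε for all sufficiently large i, where p_i denotes the i-th prime. -/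
lemma no_prime_between (i m : ℕ) (h1 : Nat.nth Nat.Prime i < m)
    (h2 : m < Nat.nth Nat.Prime (i + 1)) : ¬ m.Prime := by
  intro hm
  have hinf := Nat.infinite_setOf_prime
  have hc : i + 1 ≤ Nat.count Nat.Prime m := by
    calc i + 1 = Nat.count Nat.Prime (Nat.nth Nat.Prime i + 1) :=
          (Nat.count_nth_succ_of_infinite hinf i).symm
      _ ≤ Nat.count Nat.Prime m := Nat.count_monotone _ h1
  have : Nat.nth Nat.Prime (i + 1) ≤ m := by
    calc Nat.nth Nat.Prime (i + 1) ≤ Nat.nth Nat.Prime (Nat.count Nat.Prime m) :=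
          (Nat.nth_le_nth hinf).2 hc
      _ = m := Nat.nth_count hm
  omega

/-- Grimm's conjecture together with `g(n) < n^ε` for large `n` implies the
prime gap bound `p_{i+1} − p_i < p_i^ε` for large `i`. -/
theorem prime_gap_of_grimm (ε : ℝ) (hε0 : 0 < ε) (hε1 : ε < 1)
    (hgrimm : ∀ n k : ℕ, (∀ i ∈ Finset.Icc 1 k, 1 < n + i ∧ ¬ (n + i).Prime) →
      primeRep n k)
    (hg : ∃ N : ℕ, ∀ n : ℕ, n ≥ N → ∀ k : ℕ, primeRep n k → (k : ℝ) < (n : ℝ) ^ ε) :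
    ∃ I : ℕ, ∀ i : ℕ, i ≥ I →
      ((Nat.nth Nat.Prime (i + 1) : ℝ) - Nat.nth Nat.Prime i) <
        (Nat.nth Nat.Prime i : ℝ) ^ ε := by
  obtain ⟨N, hN⟩ := hg
  refine ⟨N, fun i hi => ?_⟩
  set p := Nat.nth Nat.Prime i with hp
  set p' := Nat.nth Nat.Prime (i + 1) with hp'
  have hinf := Nat.infinite_setOf_prime
  have hpp : p.Prime := Nat.prime_nth_prime i
  have hpp' : p'.Prime := Nat.prime_nth_prime (i + 1)
  have hlt : p < p' := (Nat.nth_lt_nth hinf).2 (lt_add_one i)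
  have hpN : p ≥ N := le_trans hi (Nat.nth_strictMono hinf).le_apply
  -- Grimm on the composite block
  have hcomp : ∀ j ∈ Finset.Icc 1 (p' - p - 1), 1 < p + j ∧ ¬ (p + j).Prime := by
    intro j hj
    simp only [Finset.mem_Icc] at hj
    constructor
    · have := hpp.two_le; omega
    · exact no_prime_between i (p + j) (by omega) (by omega)
  obtain ⟨Q, hQinj, hQ⟩ := hgrimm p (p' - p - 1) hcomp
  -- extend to a representation of length p' - p using p' itself
  have hrep : primeRep p (p' - p) := by
    refine ⟨fun j => if h : (j : ℕ) < p' - p - 1 then Q ⟨j, h⟩ else p', ?_, ?_⟩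
    · have hQlt : ∀ j : Fin (p' - p - 1), Q j < p' := by
        intro j
        have ⟨hQp, hQd⟩ := hQ j
        have hle : Q j ≤ p + (j : ℕ) + 1 := Nat.le_of_dvd (by omega) hQd
        have := j.2
        omega
      intro a b hab
      by_cases ha : (a : ℕ) < p' - p - 1 <;> by_cases hb : (b : ℕ) < p' - p - 1 <;>
        simp [ha, hb] at hab
      · have h2 := hQinj hab
        rw [Fin.mk.injEq] at h2
        exact Fin.ext h2
      · exact absurd hab (by have := hQlt ⟨a, ha⟩; omega)
      · exact absurd hab.symm (by have := hQlt ⟨b, hb⟩; omega)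
      · have := a.2; have := b.2; exact Fin.ext (by omega)
    · intro j
      by_cases h : (j : ℕ) < p' - p - 1
      · simpa [h] using hQ ⟨j, h⟩
      · have := j.2
        have hj : (j : ℕ) = p' - p - 1 := by omega
        have : p + (j : ℕ) + 1 = p' := by omega
        simp [h, this, hpp']
  have hkey := hN p hpN (p' - p) hrep
  have hcast : ((p' - p : ℕ) : ℝ) = (p' : ℝ) - p := by
    push_cast [Nat.cast_sub hlt.le]; ring
  rw [hcast] at hkey
  exact hkey
end

section
/- Suppose there exist constants α with 3/8 < α < 1/2 and c₁ > 0 such that Ψ(n + n^α, n^α) − Ψ(n, n^α) > c₁ n^α for all sufficiently large n. Then g(n) < n^α for all sufficiently large n. -/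
section Aux
open Filter Finset

lemma sum_primes_tendsto : Tendsto (fun N => ∑ p ∈ Nat.primesBelow N, (1 / p : ℝ)) atTop atTop := by
  have hns := not_summable_one_div_on_primes
  have hnn : ∀ n, 0 ≤ Set.indicator {p : ℕ | p.Prime} (fun n : ℕ => 1 / (n : ℝ)) n := by
    intro n
    apply Set.indicator_nonneg
    intro x _
    positivity
  have := (not_summable_iff_tendsto_nat_atTop_of_nonneg hnn).mp hns
  convert this using 2 with N
  rw [Nat.primesBelow, Finset.sum_filter]
  apply Finset.sum_congr rfl
  intro x _
  simp [Set.indicator_apply]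

lemma prod_primes_tendsto :
    Tendsto (fun N => ∏ p ∈ Nat.primesBelow N, (1 - 1 / p : ℝ)) atTop (nhds 0) := by
  have key : ∀ N, (0:ℝ) ≤ ∏ p ∈ Nat.primesBelow N, (1 - 1 / p : ℝ) ∧
      ∏ p ∈ Nat.primesBelow N, (1 - 1 / p : ℝ) ≤ Real.exp (-∑ p ∈ Nat.primesBelow N, (1 / p : ℝ)) := by
    intro N
    have h2 : ∀ p ∈ Nat.primesBelow N, (0:ℝ) ≤ 1 - 1 / p := by
      intro p hp
      have hp2 : 2 ≤ p := (Nat.prime_of_mem_primesBelow hp).two_le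
      have : (1:ℝ) / p ≤ 1 / 2 := by
        apply one_div_le_one_div_of_le <;> [norm_num; exact_mod_cast hp2]
      linarith
    constructor
    · exact Finset.prod_nonneg h2
    · rw [← Finset.sum_neg_distrib, Real.exp_sum]
      apply Finset.prod_le_prod h2
      intro p hp
      have := Real.add_one_le_exp (-(1 / p : ℝ))
      linarith
  have hexp : Tendsto (fun N => Real.exp (-∑ p ∈ Nat.primesBelow N, (1 / p : ℝ))) atTop (nhds 0) :=
    Real.tendsto_exp_atBot.comp (tendsto_neg_atBot_iff.mpr sum_primes_tendsto)
  exact squeeze_zero (fun N => (key N).1) (fun N => (key N).2) hexp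

lemma totient_prod_primes (t : Finset ℕ) (ht : ∀ p ∈ t, p.Prime) :
    Nat.totient (∏ p ∈ t, p) = ∏ p ∈ t, (p - 1) := by
  classical
  induction t using Finset.induction_on with
  | empty => simp
  | insert a s ha ih =>
    rw [Finset.prod_insert ha, Finset.prod_insert ha]
    have hap : a.Prime := ht a (Finset.mem_insert_self a s)
    have hco : Nat.Coprime a (∏ p ∈ s, p) := by
      apply Nat.Coprime.prod_right
      intro b hb
      exact (Nat.coprime_primes hap (ht b (Finset.mem_insert_of_mem hb))).mpr
        (fun he => ha (he ▸ hb))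
    rw [Nat.totient_mul hco, Nat.totient_prime hap,
      ih (fun p hp => ht p (Finset.mem_insert_of_mem hp))]

lemma exists_small_totient {ε : ℝ} (hε : 0 < ε) :
    ∃ a : ℕ, 0 < a ∧ (a.totient : ℝ) < ε * a := by
  obtain ⟨N, hN⟩ := (prod_primes_tendsto.eventually (gt_mem_nhds hε)).exists
  set t := Nat.primesBelow N with ht
  have hprime : ∀ p ∈ t, p.Prime := fun p hp => Nat.prime_of_mem_primesBelow hp
  refine ⟨∏ p ∈ t, p, Finset.prod_pos (fun p hp => (hprime p hp).pos), ?_⟩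
  have hcast : ((∏ p ∈ t, p : ℕ) : ℝ) = ∏ p ∈ t, (p:ℝ) := by push_cast; ring
  have htot : ((∏ p ∈ t, p : ℕ).totient : ℝ) = ∏ p ∈ t, ((p:ℝ) - 1) := by
    rw [totient_prod_primes t hprime]
    push_cast [Nat.cast_prod]
    apply Finset.prod_congr rfl
    intro p hp
    have := (hprime p hp).two_le
    push_cast [Nat.cast_sub (by omega : 1 ≤ p)]
    ring
  have heq : (∏ p ∈ t, ((p:ℝ) - 1)) = (∏ p ∈ t, (1 - 1/(p:ℝ))) * ∏ p ∈ t, (p:ℝ) := by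
    rw [← Finset.prod_mul_distrib]
    apply Finset.prod_congr rfl
    intro p hp
    have hp0 : (0:ℝ) < p := by exact_mod_cast (hprime p hp).pos
    field_simp
  rw [htot, hcast, heq]
  apply mul_lt_mul_of_pos_right hN
  apply Finset.prod_pos
  intro p hp
  exact_mod_cast (hprime p hp).pos

lemma primeCounting'_small {ε : ℝ} (hε : 0 < ε) :
    ∃ M : ℕ, ∀ m : ℕ, m ≥ M → (Nat.primeCounting' m : ℝ) ≤ ε * m := by
  obtain ⟨a, ha, hta⟩ := exists_small_totient (half_pos hε)
  obtain ⟨M, hM1, hM2⟩ : ∃ M : ℕ, (a + 1) ≤ M ∧ ((2*a + 2 : ℕ) : ℝ) ≤ (ε/2) * M := by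
    obtain ⟨M0, hM0⟩ := exists_nat_ge (((2*a + 2 : ℕ) : ℝ) / (ε/2))
    refine ⟨max (a+1) M0, le_max_left _ _, ?_⟩
    have h1 : ((2*a + 2 : ℕ) : ℝ) / (ε/2) ≤ (max (a+1) M0 : ℕ) := by
      calc ((2*a + 2 : ℕ) : ℝ) / (ε/2) ≤ M0 := hM0
        _ ≤ (max (a+1) M0 : ℕ) := by exact_mod_cast le_max_right (a+1) M0
    calc ((2*a + 2 : ℕ) : ℝ) = (((2*a+2:ℕ):ℝ) / (ε/2)) * (ε/2) := by field_simp
      _ ≤ ((max (a+1) M0 : ℕ):ℝ) * (ε/2) := by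
          apply mul_le_mul_of_nonneg_right h1 (by positivity)
      _ = (ε/2) * (max (a+1) M0 : ℕ) := by ring
  refine ⟨M, fun m hm => ?_⟩
  set n := m - (a + 1) with hn
  have hma : m = (a + 1) + n := by omega
  have hπ : Nat.primeCounting' m ≤ Nat.primeCounting' (a+1) + a.totient * (n / a + 1) := by
    rw [hma]; exact Nat.primeCounting'_add_le ha.ne' (lt_add_one a) n
  have hπ1 : Nat.primeCounting' (a+1) ≤ a + 1 := by
    rw [Nat.primeCounting', Nat.count_eq_card_filter_range]
    calc #{p ∈ range (a+1) | p.Prime} ≤ #(range (a+1)) := Finset.card_filter_le _ _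
      _ = a + 1 := Finset.card_range _
  -- real bounds
  have h1 : ((n / a : ℕ) : ℝ) ≤ (n : ℝ) / a := by
    exact Nat.cast_div_le
  have hta' : (a.totient : ℝ) ≤ (ε/2) * a := le_of_lt hta
  have htot_le : (a.totient : ℝ) * ((n/a : ℕ) + 1) ≤ (ε/2) * n + a := by
    have h2 : (a.totient : ℝ) * ((n/a : ℕ):ℝ) ≤ (ε/2) * n := by
      calc (a.totient : ℝ) * ((n/a : ℕ):ℝ) ≤ ((ε/2) * a) * ((n:ℝ)/a) := by
            apply mul_le_mul hta' h1 (by positivity) (by positivity)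
        _ = (ε/2) * n := by field_simp
    have h3 : (a.totient : ℝ) ≤ a := by exact_mod_cast Nat.totient_le a
    nlinarith
  calc (Nat.primeCounting' m : ℝ) ≤ (a + 1 : ℝ) + (a.totient : ℝ) * ((n/a : ℕ) + 1) := by
        calc (Nat.primeCounting' m : ℝ) ≤ ((Nat.primeCounting' (a+1) : ℕ) : ℝ) + (a.totient : ℝ) * ((n/a:ℕ) + 1) := by
              have hπ' : ((Nat.primeCounting' m : ℕ):ℝ) ≤ (((a+1).primeCounting' + a.totient * (n / a + 1) : ℕ):ℝ) := by exact_mod_cast hπ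
              push_cast at hπ'
              linarith
          _ ≤ (a+1:ℝ) + (a.totient : ℝ) * ((n/a:ℕ) + 1) := by
              have : ((Nat.primeCounting' (a+1) : ℕ) : ℝ) ≤ (a+1:ℝ) := by exact_mod_cast hπ1
              linarith
    _ ≤ ((2*a + 2 : ℕ):ℝ) + (ε/2) * n := by push_cast; linarith
    _ ≤ (ε/2) * M + (ε/2) * n := by linarith
    _ ≤ (ε/2) * m + (ε/2) * m := by
        have hm' : (M:ℝ) ≤ m := by exact_mod_cast hm
        have hn' : (n:ℝ) ≤ m := by exact_mod_cast Nat.sub_le m (a+1)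
        have := half_pos hε
        nlinarith
    _ = ε * m := by ring

end Aux

open Filter in
/-- If `Ψ(n + n^α, n^α) − Ψ(n, n^α) > c₁ n^α` for large `n`, with
`3/8 < α < 1/2` and `c₁ > 0`, then `g(n) < n^α` for large `n`. -/
theorem g_lt_rpow_alpha (α c₁ : ℝ) (hα0 : 3 / 8 < α) (hα : α < 1 / 2) (hc : c₁ > 0)
    (h : ∃ N : ℕ, ∀ n : ℕ, n ≥ N →
      (Psi ((n : ℝ) + (n : ℝ) ^ α) ((n : ℝ) ^ α) : ℝ) >
        (Psi (n : ℝ) ((n : ℝ) ^ α) : ℝ) + c₁ * (n : ℝ) ^ α) :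
    ∃ N : ℕ, ∀ n : ℕ, n ≥ N → ∀ k : ℕ, primeRep n k → (k : ℝ) < (n : ℝ) ^ α := by
  obtain ⟨N₀, hN₀⟩ := h
  obtain ⟨M, hM⟩ := primeCounting'_small (half_pos hc)
  have hα' : (0:ℝ) < α := by linarith
  have htend : Tendsto (fun n : ℕ => (n:ℝ) ^ α) atTop atTop :=
    (tendsto_rpow_atTop hα').comp tendsto_natCast_atTop_atTop
  obtain ⟨N₁, hN₁⟩ := Filter.eventually_atTop.mp (htend.eventually_ge_atTop (max (M:ℝ) 2))
  refine ⟨max N₀ N₁, fun n hn k hrep => ?_⟩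
  by_contra hcon
  push_neg at hcon
  set y : ℝ := (n:ℝ) ^ α with hy
  have hymax : max (M:ℝ) 2 ≤ y := hN₁ n (le_trans (le_max_right _ _) hn)
  have hy2 : (2:ℝ) ≤ y := le_trans (le_max_right _ _) hymax
  have hyM : (M:ℝ) ≤ y := le_trans (le_max_left _ _) hymax
  have hy0 : (0:ℝ) ≤ y := by linarith
  set A : Set ℕ := {m : ℕ | 0 < m ∧ (m : ℝ) ≤ (n:ℝ) ∧ ∀ p : ℕ, p.Prime → p ∣ m → (p : ℝ) ≤ y}
    with hA
  set B : Set ℕ := {m : ℕ | 0 < m ∧ (m : ℝ) ≤ (n:ℝ) + y ∧ ∀ p : ℕ, p.Prime → p ∣ m → (p : ℝ) ≤ y}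
    with hB
  have hAB : A ⊆ B := fun m hm => ⟨hm.1, by linarith [hm.2.1], hm.2.2⟩
  have hBfin : B.Finite := by
    apply (Set.finite_Iic (⌊(n:ℝ) + y⌋₊)).subset
    intro m hm
    exact Nat.le_floor hm.2.1
  have hsplit : (B \ A).ncard + A.ncard = B.ncard :=
    Set.ncard_diff_add_ncard_of_subset hAB hBfin
  have hPsiA : Psi (n:ℝ) y = A.ncard := rfl
  have hPsiB : Psi ((n:ℝ) + y) y = B.ncard := rfl
  have hgt := hN₀ n (le_trans (le_max_left _ _) hn)
  rw [show ((n:ℝ) ^ α) = y from rfl] at hgt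
  have hcard : c₁ * y < ((B \ A).ncard : ℝ) := by
    rw [hPsiA, hPsiB] at hgt
    have : ((B \ A).ncard : ℝ) + (A.ncard : ℝ) = (B.ncard : ℝ) := by exact_mod_cast hsplit
    linarith
  -- the injection into small primes
  obtain ⟨P, hPinj, hP⟩ := hrep
  set T : Set ℕ := {p : ℕ | p.Prime ∧ (p:ℝ) ≤ y} with hT
  have hTfin : T.Finite := by
    apply (Set.finite_Iic (⌊y⌋₊)).subset
    intro p hp
    exact Nat.le_floor hp.2
  set f : ℕ → ℕ := fun m => if hm : m - n - 1 < k then P ⟨m - n - 1, hm⟩ else 0 with hf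
  have hkey : ∀ m ∈ B \ A, n < m ∧ m - n - 1 < k ∧ f m ∈ T := by
    intro m hm
    obtain ⟨⟨hm0, hmle, hsm⟩, hmA⟩ := hm
    have hnm : n < m := by
      by_contra hnm
      push_neg at hnm
      exact hmA ⟨hm0, by exact_mod_cast hnm, hsm⟩
    have hjle : ((m - n : ℕ) : ℝ) ≤ y := by
      rw [Nat.cast_sub hnm.le]; linarith
    have hjk : (m - n : ℕ) ≤ k := by
      have : ((m - n : ℕ) : ℝ) ≤ (k : ℝ) := le_trans hjle hcon
      exact_mod_cast this
    have hik : m - n - 1 < k := by omega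
    refine ⟨hnm, hik, ?_⟩
    rw [hf]
    simp only [dif_pos hik]
    obtain ⟨hp, hd⟩ := hP ⟨m - n - 1, hik⟩
    have hdm : P ⟨m - n - 1, hik⟩ ∣ m := by
      have : n + (m - n - 1) + 1 = m := by omega
      rwa [this] at hd
    exact ⟨hp, hsm _ hp hdm⟩
  have hmaps : ∀ m ∈ B \ A, f m ∈ T := fun m hm => (hkey m hm).2.2
  have hinj : Set.InjOn f (B \ A) := by
    intro m₁ hm₁ m₂ hm₂ hfe
    obtain ⟨hn₁, hk₁, -⟩ := hkey m₁ hm₁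
    obtain ⟨hn₂, hk₂, -⟩ := hkey m₂ hm₂
    rw [hf] at hfe
    simp only [dif_pos hk₁, dif_pos hk₂] at hfe
    have := hPinj hfe
    have : m₁ - n - 1 = m₂ - n - 1 := congrArg Fin.val this
    omega
  have hle1 : (B \ A).ncard ≤ T.ncard :=
    Set.ncard_le_ncard_of_injOn f hmaps hinj hTfin
  -- T is contained in primesBelow (⌊y⌋₊ + 1)
  set b : ℕ := ⌊y⌋₊ with hb
  have hle2 : T.ncard ≤ Nat.primeCounting' (b + 1) := by
    rw [← Nat.primesBelow_card_eq_primeCounting', ← Set.ncard_coe_finset]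
    apply Set.ncard_le_ncard _ (Nat.primesBelow (b+1)).finite_toSet
    intro p hp
    simp only [Finset.coe_sort_coe, Finset.mem_coe, Nat.mem_primesBelow]
    exact ⟨Nat.lt_succ_of_le (Nat.le_floor hp.2), hp.1⟩
  have hMb : M ≤ b + 1 := by
    have : (M:ℝ) < ((b+1 : ℕ):ℝ) := by
      push_cast
      calc (M:ℝ) ≤ y := hyM
        _ < b + 1 := Nat.lt_floor_add_one y
    exact_mod_cast this.le
  have hle3 : (Nat.primeCounting' (b+1) : ℝ) ≤ (c₁/2) * (b+1) := by
    exact_mod_cast hM (b+1) hMb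
  have hby : ((b:ℕ):ℝ) ≤ y := Nat.floor_le hy0
  have hle4 : (c₁/2) * ((b:ℝ)+1) ≤ c₁ * y := by nlinarith
  have hchain : ((B \ A).ncard : ℝ) ≤ c₁ * y := by
    calc ((B \ A).ncard : ℝ) ≤ (T.ncard : ℝ) := by exact_mod_cast hle1
      _ ≤ (Nat.primeCounting' (b+1) : ℝ) := by exact_mod_cast hle2
      _ ≤ (c₁/2) * ((b:ℝ)+1) := by linarith
      _ ≤ c₁ * y := hle4
  linarith
end
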